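/- For all g₁, g₂ in SU(2), the traces tr(g₁), tr(g₂), tr(g₁g₂) are real, the half-traces X₁ = tr(g₁)/2, X₂ = tr(g₂)/2, X₃ = tr(g₁g₂)/2 satisfy −1 ≤ Xᵢ ≤ 1 for i = 1,2,3, and Θ(X₁, X₂, X₃) ≤ 0. (Thus the trace-coordinate map sends SU(2)² into the closure of the region I₃.) -/
import Mathlib

open Matrix Complex

private lemma su2_struct (M : Matrix (Fin 2) (Fin 2) ℂ)
    (hM : M ∈ Matrix.specialUnitaryGroup (Fin 2) ℂ) :
    M 1 1 = (starRingEnd ℂ) (M 0 0) ∧ M 1 0 = -(starRingEnd ℂ) (M 0 1) ∧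
      M 0 0 * (starRingEnd ℂ) (M 0 0) + M 0 1 * (starRingEnd ℂ) (M 0 1) = 1 := by
  obtain ⟨hu, hdet⟩ := (Matrix.mem_specialUnitaryGroup_iff).mp hM
  rw [Matrix.mem_unitaryGroup_iff] at hu
  set a := M 0 0; set b := M 0 1; set c := M 1 0; set d := M 1 1
  have h1 : a * (starRingEnd ℂ) a + b * (starRingEnd ℂ) b = 1 := by
    have := congrFun (congrFun hu 0) 0
    simpa [Matrix.mul_apply, Fin.sum_univ_two, Matrix.conjTranspose_apply] using this
  have h2 : c * (starRingEnd ℂ) a + d * (starRingEnd ℂ) b = 0 := by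
    have := congrFun (congrFun hu 1) 0
    simpa [Matrix.mul_apply, Fin.sum_univ_two, Matrix.conjTranspose_apply] using this
  have hdet' : a * d - b * c = 1 := by
    have := hdet
    rw [Matrix.det_fin_two] at this
    exact this
  have hd : d = (starRingEnd ℂ) a := by linear_combination -(d * h1) + (starRingEnd ℂ) a * hdet' + b * h2
  have hc : c = -(starRingEnd ℂ) b := by linear_combination -(c * h1) - (starRingEnd ℂ) b * hdet' + a * h2
  exact ⟨hd, hc, h1⟩

set_option maxHeartbeats 1000000 in
theorem su2_trace_coordinates_mem_closure_I3
    (g₁ g₂ : Matrix.specialUnitaryGroup (Fin 2) ℂ) :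
    ∃ X₁ X₂ X₃ : ℝ,
      Matrix.trace ((g₁ : Matrix (Fin 2) (Fin 2) ℂ)) = 2 * (X₁ : ℂ) ∧
      Matrix.trace ((g₂ : Matrix (Fin 2) (Fin 2) ℂ)) = 2 * (X₂ : ℂ) ∧
      Matrix.trace (((g₁ * g₂ : Matrix.specialUnitaryGroup (Fin 2) ℂ) :
        Matrix (Fin 2) (Fin 2) ℂ)) = 2 * (X₃ : ℂ) ∧
      -1 ≤ X₁ ∧ X₁ ≤ 1 ∧ -1 ≤ X₂ ∧ X₂ ≤ 1 ∧ -1 ≤ X₃ ∧ X₃ ≤ 1 ∧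
      (X₃ - X₁ * X₂) ^ 2 - (X₁ ^ 2 - 1) * (X₂ ^ 2 - 1) ≤ 0 := by
  obtain ⟨hd₁, hc₁, h₁⟩ := su2_struct g₁ g₁.2
  obtain ⟨hd₂, hc₂, h₂⟩ := su2_struct g₂ g₂.2
  set M₁ := (g₁ : Matrix (Fin 2) (Fin 2) ℂ)
  set M₂ := (g₂ : Matrix (Fin 2) (Fin 2) ℂ)
  set a := M₁ 0 0; set b := M₁ 0 1
  set c := M₂ 0 0; set d := M₂ 0 1
  -- real norm equations
  have e₁ : a.re ^ 2 + a.im ^ 2 + (b.re ^ 2 + b.im ^ 2) = 1 := by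
    have e := congrArg Complex.re h₁
    simp only [Complex.add_re, Complex.mul_re, Complex.conj_re, Complex.conj_im,
      Complex.one_re] at e
    linear_combination e
  have e₂ : c.re ^ 2 + c.im ^ 2 + (d.re ^ 2 + d.im ^ 2) = 1 := by
    have e := congrArg Complex.re h₂
    simp only [Complex.add_re, Complex.mul_re, Complex.conj_re, Complex.conj_im,
      Complex.one_re] at e
    linear_combination e
  set p := a.re; set q := c.re
  set t := (a * c - b * (starRingEnd ℂ) d).re with ht
  have hX₃ : t = p * q - a.im * c.im - (b.re * d.re + b.im * d.im) := by
    rw [ht]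
    simp only [Complex.sub_re, Complex.mul_re, Complex.conj_re, Complex.conj_im]
    ring
  -- Cauchy–Schwarz via the Lagrange identity
  have hCS : (t - p * q) ^ 2 ≤ (1 - p ^ 2) * (1 - q ^ 2) := by
    rw [hX₃]
    nlinarith [sq_nonneg (a.im * d.re - b.re * c.im), sq_nonneg (a.im * d.im - b.im * c.im),
      sq_nonneg (b.re * d.im - b.im * d.re), e₁, e₂]
  have hp2 : p ^ 2 ≤ 1 := by nlinarith [sq_nonneg a.im, sq_nonneg b.re, sq_nonneg b.im]
  have hq2 : q ^ 2 ≤ 1 := by nlinarith [sq_nonneg c.im, sq_nonneg d.re, sq_nonneg d.im]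
  have hpq : p * q ≤ 1 := by nlinarith [sq_nonneg (p - q)]
  have hpq' : -1 ≤ p * q := by nlinarith [sq_nonneg (p + q)]
  refine ⟨p, q, t, ?_, ?_, ?_, by nlinarith, by nlinarith, by nlinarith, by nlinarith, ?_, ?_, by nlinarith⟩
  · rw [Matrix.trace_fin_two, show M₁ 1 1 = (starRingEnd ℂ) a from hd₁, Complex.add_conj]
    push_cast; ring
  · rw [Matrix.trace_fin_two, show M₂ 1 1 = (starRingEnd ℂ) c from hd₂, Complex.add_conj]
    push_cast; ring
  · have hco : ((g₁ * g₂ : Matrix.specialUnitaryGroup (Fin 2) ℂ) :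
        Matrix (Fin 2) (Fin 2) ℂ) = M₁ * M₂ := rfl
    rw [hco, Matrix.trace_fin_two, Matrix.mul_apply, Matrix.mul_apply]
    simp only [Fin.sum_univ_two]
    rw [show M₁ 1 1 = (starRingEnd ℂ) a from hd₁, show M₁ 1 0 = -(starRingEnd ℂ) b from hc₁,
      show M₂ 1 1 = (starRingEnd ℂ) c from hd₂, show M₂ 1 0 = -(starRingEnd ℂ) d from hc₂]
    have key : a * c + b * -(starRingEnd ℂ) d + (-(starRingEnd ℂ) b * d +
        (starRingEnd ℂ) a * (starRingEnd ℂ) c)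
        = (a * c - b * (starRingEnd ℂ) d) + (starRingEnd ℂ) (a * c - b * (starRingEnd ℂ) d) := by
      simp only [map_sub, _root_.map_mul, Complex.conj_conj]
      ring
    rw [key, Complex.add_conj]
    push_cast; ring
  · -- -1 ≤ t
    nlinarith [hCS, sq_nonneg (1 + p * q), sq_nonneg (p + q), sq_nonneg (t + 1)]
  · -- t ≤ 1
    nlinarith [hCS, sq_nonneg (1 - p * q), sq_nonneg (p - q), sq_nonneg (t - 1)]
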